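/- The Apéry numbers a_n = \sum_{k=0}^n \binom{n}{k}^2 \binom{n+k}{k}^2 satisfy the recurrence (n+1)^3 a_{n+1} - (34n^3+51n^2+27n+5) a_n + n^3 a_{n-1} = 0 for all n \ge 1, together with a_0 = 1 and a_1 = 5. -/

import Mathlib

/-- Summand of the Apéry numbers. -/
def Fk (n k : ℕ) : ℤ := (n.choose k : ℤ) ^ 2 * ((n + k).choose k : ℤ) ^ 2

/-- Zeilberger certificate coefficient. -/
def cc (n k : ℕ) : ℤ := -4 * (2 * n + 1) * ((2 * n + 1) ^ 2 - k * (2 * k + 1))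

/-- Telescoping function. -/
def UU (n : ℕ) : ℕ → ℤ
  | 0 => 0
  | (j + 1) => cc n j * Fk n j

lemma key (n k : ℕ) (hn : 1 ≤ n) :
    ((n : ℤ) + 1) ^ 3 * Fk (n + 1) k
      - (34 * (n : ℤ) ^ 3 + 51 * (n : ℤ) ^ 2 + 27 * n + 5) * Fk n k
      + (n : ℤ) ^ 3 * Fk (n - 1) k = UU n (k + 1) - UU n k := by
  match k with
  | 0 =>
    simp only [Fk, UU, cc, Nat.choose_zero_right, Nat.add_zero]
    push_cast
    ring
  | (j + 1) =>
    rcases lt_trichotomy n j with h | h | h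
    · -- k = j+1 ≥ n+2 : everything vanishes
      have h1 : (n + 1).choose (j + 1) = 0 := Nat.choose_eq_zero_of_lt (by omega)
      have h2 : n.choose (j + 1) = 0 := Nat.choose_eq_zero_of_lt (by omega)
      have h3 : (n - 1).choose (j + 1) = 0 := Nat.choose_eq_zero_of_lt (by omega)
      have h4 : n.choose j = 0 := Nat.choose_eq_zero_of_lt (by omega)
      simp [Fk, UU, h1, h2, h3, h4]
    · -- k = n+1 : boundary case
      subst h
      have h2 : n.choose (n + 1) = 0 := Nat.choose_eq_zero_of_lt (by omega)
      have h3 : (n - 1).choose (n + 1) = 0 := Nat.choose_eq_zero_of_lt (by omega)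
      simp only [Fk, UU, cc, h2, h3, Nat.choose_self]
      have hcb := Nat.succ_mul_centralBinom_succ n
      unfold Nat.centralBinom at hcb
      have hZ : ((n : ℤ) + 1) * ((2 * (n + 1)).choose (n + 1) : ℤ)
          = 2 * (2 * n + 1) * ((2 * n).choose n : ℤ) := by exact_mod_cast hcb
      have e1 : n + 1 + (n + 1) = 2 * (n + 1) := by ring
      have e2 : n + n = 2 * n := by ring
      rw [e1, e2]
      push_cast
      linear_combination ((n : ℤ) + 1) * (((n : ℤ) + 1) * ((2 * (n + 1)).choose (n + 1) : ℤ)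
        + 2 * (2 * n + 1) * ((2 * n).choose n : ℤ)) * hZ
    · -- main case: j + 1 ≤ n
      have hjn : j ≤ n := le_of_lt h
      have hkn : j + 1 ≤ n := h
      have hnj : (n : ℚ) - j ≠ 0 := by
        have : (j : ℚ) < n := by exact_mod_cast h
        intro hc; nlinarith
      have hn0 : (n : ℚ) ≠ 0 := by positivity
      have hn1 : (n : ℚ) + 1 ≠ 0 := by positivity
      have hnj1 : (n : ℚ) + j + 1 ≠ 0 := by positivity
      have hX1 : (((n + 1).choose (j + 1) : ℕ) : ℚ)
          = ((n : ℚ) + 1) * (n.choose (j + 1) : ℚ) / ((n : ℚ) - j) := by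
        rw [eq_div_iff hnj]
        have hN := Nat.choose_mul_succ_eq n (j + 1)
        rw [show n + 1 - (j + 1) = n - j from by omega] at hN
        have hQ := congrArg (fun x : ℕ => (x : ℚ)) hN
        push_cast [Nat.cast_sub hjn] at hQ
        linear_combination -hQ
      have hX2 : (((n - 1).choose (j + 1) : ℕ) : ℚ)
          = ((n : ℚ) - (j + 1)) * (n.choose (j + 1) : ℚ) / (n : ℚ) := by
        rw [eq_div_iff hn0]
        have hN := Nat.choose_mul_succ_eq (n - 1) (j + 1)
        rw [show n - 1 + 1 = n from by omega] at hN
        have hQ := congrArg (fun x : ℕ => (x : ℚ)) hN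
        push_cast [Nat.cast_sub hkn] at hQ
        linear_combination hQ
      have hX3 : (((n + 1 + (j + 1)).choose (j + 1) : ℕ) : ℚ)
          = ((n : ℚ) + j + 2) * ((n + (j + 1)).choose (j + 1) : ℚ) / ((n : ℚ) + 1) := by
        rw [eq_div_iff hn1]
        have hN := Nat.choose_mul_succ_eq (n + j + 1) (j + 1)
        rw [show n + j + 1 + 1 - (j + 1) = n + 1 from by omega,
            show n + j + 1 + 1 = n + 1 + (j + 1) from by omega,
            show n + j + 1 = n + (j + 1) from by omega] at hN
        have hQ := congrArg (fun x : ℕ => (x : ℚ)) hN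
        push_cast at hQ
        linear_combination -hQ
      have hX4 : (((n - 1 + (j + 1)).choose (j + 1) : ℕ) : ℚ)
          = (n : ℚ) * ((n + (j + 1)).choose (j + 1) : ℚ) / ((n : ℚ) + j + 1) := by
        rw [eq_div_iff hnj1]
        have hN := Nat.choose_mul_succ_eq (n + j) (j + 1)
        rw [show n + j + 1 - (j + 1) = n from by omega,
            show n + j + 1 = n + (j + 1) from by omega,
            show n + j = n - 1 + (j + 1) from by omega] at hN
        have hQ := congrArg (fun x : ℕ => (x : ℚ)) hN
        push_cast at hQ
        linear_combination hQ
      have hY1 : ((n.choose j : ℕ) : ℚ)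
          = (n.choose (j + 1) : ℚ) * ((j : ℚ) + 1) / ((n : ℚ) - j) := by
        rw [eq_div_iff hnj]
        have hN := Nat.choose_succ_right_eq n j
        have hQ := congrArg (fun x : ℕ => (x : ℚ)) hN
        push_cast [Nat.cast_sub hjn] at hQ
        linear_combination -hQ
      have hY2 : (((n + j).choose j : ℕ) : ℚ)
          = ((n + (j + 1)).choose (j + 1) : ℚ) * ((j : ℚ) + 1) / ((n : ℚ) + j + 1) := by
        rw [eq_div_iff hnj1]
        have hN := Nat.add_one_mul_choose_eq (n + j) j
        rw [show n + j + 1 = n + (j + 1) from by omega] at hN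
        have hQ := congrArg (fun x : ℕ => (x : ℚ)) hN
        push_cast at hQ
        linear_combination hQ
      simp only [Fk, UU, cc]
      qify
      rw [hX1, hX2, hX3, hX4, hY1, hY2]
      field_simp
      ring

/-- The Apéry numbers `a n = ∑ k, (n choose k)^2 * ((n+k) choose k)^2`. -/
def aperyA (n : ℕ) : ℤ :=
  ∑ k ∈ Finset.range (n + 1), (n.choose k : ℤ) ^ 2 * ((n + k).choose k : ℤ) ^ 2

lemma aperyA_eq (n : ℕ) : aperyA n = ∑ k ∈ Finset.range (n + 1), Fk n k := rfl

theorem apery_a_recurrence :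
    aperyA 0 = 1 ∧ aperyA 1 = 5 ∧
      ∀ n : ℕ, 1 ≤ n →
        ((n : ℤ) + 1) ^ 3 * aperyA (n + 1)
          - (34 * (n : ℤ) ^ 3 + 51 * (n : ℤ) ^ 2 + 27 * n + 5) * aperyA n
          + (n : ℤ) ^ 3 * aperyA (n - 1) = 0 := by
  refine ⟨by norm_num [aperyA, Finset.sum_range_succ], by norm_num [aperyA, Finset.sum_range_succ], ?_⟩
  intro n hn
  have hsum : ∑ k ∈ Finset.range (n + 2),
      (((n : ℤ) + 1) ^ 3 * Fk (n + 1) k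
        - (34 * (n : ℤ) ^ 3 + 51 * (n : ℤ) ^ 2 + 27 * n + 5) * Fk n k
        + (n : ℤ) ^ 3 * Fk (n - 1) k)
      = ∑ k ∈ Finset.range (n + 2), (UU n (k + 1) - UU n k) :=
    Finset.sum_congr rfl fun k _ => key n k hn
  have htel : ∑ k ∈ Finset.range (n + 2), (UU n (k + 1) - UU n k) = 0 := by
    rw [Finset.sum_range_sub (UU n)]
    have : n.choose (n + 1) = 0 := Nat.choose_eq_zero_of_lt (by omega)
    simp [UU, Fk, this]
  have hA1 : ∑ k ∈ Finset.range (n + 2), Fk (n + 1) k = aperyA (n + 1) := rfl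
  have hA2 : ∑ k ∈ Finset.range (n + 2), Fk n k = aperyA n := by
    rw [show n + 2 = (n + 1) + 1 from rfl, Finset.sum_range_succ, aperyA_eq]
    have : n.choose (n + 1) = 0 := Nat.choose_eq_zero_of_lt (by omega)
    simp [Fk, this]
  have hA3 : ∑ k ∈ Finset.range (n + 2), Fk (n - 1) k = aperyA (n - 1) := by
    rw [show n + 2 = (n + 1) + 1 from rfl, Finset.sum_range_succ, Finset.sum_range_succ,
      aperyA_eq, show n - 1 + 1 = n from by omega]
    have h1 : (n - 1).choose n = 0 := Nat.choose_eq_zero_of_lt (by omega)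
    have h2 : (n - 1).choose (n + 1) = 0 := Nat.choose_eq_zero_of_lt (by omega)
    simp [Fk, h1, h2]
  rw [htel] at hsum
  rw [Finset.sum_add_distrib, Finset.sum_sub_distrib, ← Finset.mul_sum, ← Finset.mul_sum,
    ← Finset.mul_sum, hA1, hA2, hA3] at hsum
  exact hsum
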